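/- arXiv:2506.20351 — 5 statements merged into one kernel-verified Lean document; each statement's English description precedes it below -/
import Mathlib

section
/- Let G be a finite abelian group of order g and A ⊆ G with |A| = k. Then r(A) + r(Aᶜ) = g² − 3gk + 3k², where Aᶜ is the complement of A in G. -/
open scoped Classical

noncomputable def rval {G : Type*} [AddCommGroup G] (A B C : Finset G) : ℕ :=
  ((A ×ˢ B).filter (fun p => p.1 + p.2 ∈ C)).card

noncomputable def rv {G : Type*} [AddCommGroup G] (A : Finset G) : ℕ := rval A A A

open Finset

lemma rval_eq_sum {G : Type*} [AddCommGroup G] (A B C : Finset G) :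
    rval A B C = ∑ a ∈ A, (B.filter (fun b => a + b ∈ C)).card := by
  unfold rval
  rw [Finset.card_filter, Finset.sum_product]
  simp only [Finset.card_filter]

lemma rval_eq_sum' {G : Type*} [AddCommGroup G] (A B C : Finset G) :
    rval A B C = ∑ b ∈ B, (A.filter (fun a => a + b ∈ C)).card := by
  unfold rval
  rw [Finset.card_filter, Finset.sum_product_right]
  simp only [Finset.card_filter]

lemma filter_add_card {G : Type*} [AddCommGroup G] [Fintype G] (b : G) (C : Finset G) :
    ((univ : Finset G).filter (fun a => a + b ∈ C)).card = C.card := by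
  apply Finset.card_bij (fun a _ => a + b)
  · intro a ha; simpa using (Finset.mem_filter.mp ha).2
  · intro a₁ h₁ a₂ h₂ h; exact add_right_cancel h
  · intro c hc; exact ⟨c - b, by simp [hc], by abel⟩

lemma rval_univ_left {G : Type*} [AddCommGroup G] [Fintype G] (B C : Finset G) :
    rval (univ : Finset G) B C = B.card * C.card := by
  rw [rval_eq_sum']
  rw [Finset.sum_congr rfl (fun b _ => filter_add_card b C)]
  simp [mul_comm]

lemma rval_univ_mid {G : Type*} [AddCommGroup G] [Fintype G] (A C : Finset G) :
    rval A (univ : Finset G) C = A.card * C.card := by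
  rw [rval_eq_sum]
  have : ∀ a : G, ((univ : Finset G).filter (fun b => a + b ∈ C)).card = C.card := by
    intro a
    have := filter_add_card (C := C) a
    simpa [add_comm] using this
  rw [Finset.sum_congr rfl (fun a _ => this a)]
  simp [mul_comm]

lemma rval_univ_right {G : Type*} [AddCommGroup G] [Fintype G] (A B : Finset G) :
    rval A B (univ : Finset G) = A.card * B.card := by
  unfold rval
  rw [Finset.filter_true_of_mem (fun x _ => Finset.mem_univ _), Finset.card_product]

lemma rval_split_left {G : Type*} [AddCommGroup G] [Fintype G] (A B C : Finset G) :
    rval A B C + rval Aᶜ B C = rval (univ : Finset G) B C := by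
  rw [rval_eq_sum, rval_eq_sum, rval_eq_sum]
  exact Finset.sum_add_sum_compl A _

lemma rval_split_mid {G : Type*} [AddCommGroup G] [Fintype G] (A B C : Finset G) :
    rval A B C + rval A Bᶜ C = rval A (univ : Finset G) C := by
  rw [rval_eq_sum', rval_eq_sum', rval_eq_sum']
  exact Finset.sum_add_sum_compl B _

lemma rval_split_right {G : Type*} [AddCommGroup G] [Fintype G] (A B C : Finset G) :
    rval A B C + rval A B Cᶜ = rval A B (univ : Finset G) := by
  rw [rval_univ_right]
  unfold rval
  simpa [Finset.mem_compl] using Finset.card_filter_add_card_filter_not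
    (s := A ×ˢ B) (p := fun p => p.1 + p.2 ∈ C)

theorem stmt1 {G : Type*} [AddCommGroup G] [Fintype G] (A : Finset G) (g k : ℕ)
    (hg : Fintype.card G = g) (hk : A.card = k) :
    (rv A : ℤ) + rv Aᶜ = (g : ℤ) ^ 2 - 3 * g * k + 3 * k ^ 2 := by
  have hkg : k ≤ g := by rw [← hk, ← hg]; exact Finset.card_le_univ A
  have hcz : ((Aᶜ.card : ℕ) : ℤ) = (g : ℤ) - k := by
    rw [Finset.card_compl, hk, hg]; omega
  have h1 := rval_split_left A Aᶜ Aᶜ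
  have h2 := rval_split_mid A A Aᶜ
  have h3 := rval_split_right A A A
  rw [rval_univ_left] at h1
  rw [rval_univ_mid, hk] at h2
  rw [rval_univ_right, hk] at h3
  have h1' : (rval A Aᶜ Aᶜ : ℤ) + rval Aᶜ Aᶜ Aᶜ = ((g:ℤ) - k) * ((g:ℤ) - k) := by
    rw [← hcz]; exact_mod_cast h1
  have h2' : (rval A A Aᶜ : ℤ) + rval A Aᶜ Aᶜ = (k : ℤ) * ((g:ℤ) - k) := by
    rw [← hcz]; exact_mod_cast h2
  have h3' : (rval A A A : ℤ) + rval A A Aᶜ = (k : ℤ) * k := by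
    exact_mod_cast h3
  unfold rv
  linear_combination h1' - h2' + h3'
end

section
/- If A ⊆ 𝔽_{2^n} with |A| = 4 and 0 ∉ A, then r(A) ∈ {0, 6}. -/
open scoped Classical

theorem stmt13 (n : ℕ) (hn : 0 < n) (A : Finset (GaloisField 2 n))
    (hA : A.card = 4) (h0 : (0 : GaloisField 2 n) ∉ A) :
    rv A ∈ ({0, 6} : Set ℕ) := by
  classical
  have self0 : ∀ x : GaloisField 2 n, x + x = 0 := fun x => CharTwo.add_self_eq_zero x
  set T : Finset (GaloisField 2 n × GaloisField 2 n) := (A ×ˢ A).filter (fun p => p.1 + p.2 ∈ A) with hTdef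
  have hrv : rv A = T.card := rfl
  rcases T.eq_empty_or_nonempty with h | ⟨⟨a, b⟩, habT⟩
  · left; rw [hrv, h, Finset.card_empty]
  · right
    simp only [hTdef, Finset.mem_filter, Finset.mem_product] at habT
    obtain ⟨⟨haA, hbA⟩, hcA⟩ := habT
    set c : GaloisField 2 n := a + b with hc
    -- basic nonzero facts
    have ha0 : a ≠ 0 := fun h => h0 (h ▸ haA)
    have hb0 : b ≠ 0 := fun h => h0 (h ▸ hbA)
    have hc0 : c ≠ 0 := fun h => h0 (h ▸ hcA)
    have hab : a ≠ b := by
      intro h; apply hc0; rw [hc, h, self0]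
    have hac : a ≠ c := fun h => hb0 (left_eq_add.mp (h.trans hc))
    have hbc : b ≠ c := fun h => ha0 (right_eq_add.mp (h.trans hc))
    -- sum identities
    have hsum_ac : a + c = b := by rw [hc, ← add_assoc, self0, zero_add]
    have hsum_bc : b + c = a := by rw [hc, add_comm a b, ← add_assoc, self0, zero_add]
    set S : Finset (GaloisField 2 n) := {a, b, c} with hSdef
    have hSA : S ⊆ A := by
      intro x hx
      simp only [hSdef, Finset.mem_insert, Finset.mem_singleton] at hx
      rcases hx with rfl | rfl | rfl <;> assumption
    have hScard : S.card = 3 := by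
      rw [hSdef, Finset.card_insert_of_notMem, Finset.card_insert_of_notMem,
        Finset.card_singleton]
      · simpa using hbc
      · simp [hab, hac]
    have hmemS : ∀ x : GaloisField 2 n, x ∈ S ↔ x = a ∨ x = b ∨ x = c := by
      intro x; simp [hSdef]
    have hclose : ∀ u ∈ S, ∀ v ∈ S, u ≠ v → u + v ∈ S := by
      intro u hu v hv huv
      rw [hmemS] at hu hv ⊢
      rcases hu with rfl | rfl | rfl <;> rcases hv with rfl | rfl | rfl <;>
        first
        | exact absurd rfl huv
        | (right; right; rw [← hc])
        | (right; right; rw [add_comm, ← hc])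
        | (right; left; rw [hsum_ac])
        | (right; left; rw [add_comm, hsum_ac])
        | (left; rw [hsum_bc])
        | (left; rw [add_comm, hsum_bc])
    -- the complement of S in A has one element
    have hBcard : (A \ S).card = 1 := by
      rw [Finset.card_sdiff_of_subset hSA, hA, hScard]
    have hBone : ∀ u ∈ A \ S, ∀ v ∈ A \ S, u = v := by
      intro u hu v hv
      exact Finset.card_le_one.mp (le_of_eq hBcard) u hu v hv
    have hTeq : T = S.offDiag := by
      ext ⟨d, e⟩
      simp only [hTdef, Finset.mem_filter, Finset.mem_product, Finset.mem_offDiag]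
      constructor
      · rintro ⟨⟨hdA, heA⟩, hfA⟩
        set f : GaloisField 2 n := d + e with hf
        have hd0 : d ≠ 0 := fun h => h0 (h ▸ hdA)
        have he0 : e ≠ 0 := fun h => h0 (h ▸ heA)
        have hf0 : f ≠ 0 := fun h => h0 (h ▸ hfA)
        have hde : d ≠ e := by intro h; apply hf0; rw [hf, h, self0]
        have hdf : d ≠ f := fun h => he0 (left_eq_add.mp (h.trans hf))
        have hef : e ≠ f := fun h => hd0 (right_eq_add.mp (h.trans hf))
        have hsum_df : d + f = e := by rw [hf, ← add_assoc, self0, zero_add]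
        have hsum_ef : e + f = d := by
          rw [hf, add_comm d e, ← add_assoc, self0, zero_add]
        -- at most one of d, e, f lies outside S
        by_cases hdS : d ∈ S
        · by_cases heS : e ∈ S
          · exact ⟨hdS, heS, hde⟩
          · -- e ∉ S; show f ∈ S, then e = d + f ∈ S, contradiction
            exfalso
            by_cases hfS : f ∈ S
            · exact heS (hsum_df ▸ hclose d hdS f hfS hdf)
            · have he' : e ∈ A \ S := Finset.mem_sdiff.mpr ⟨heA, heS⟩
              have hf' : f ∈ A \ S := Finset.mem_sdiff.mpr ⟨hfA, hfS⟩
              exact hef (hBone e he' f hf')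
        · by_cases heS : e ∈ S
          · exfalso
            by_cases hfS : f ∈ S
            · exact hdS (hsum_ef ▸ hclose e heS f hfS hef)
            · have hd' : d ∈ A \ S := Finset.mem_sdiff.mpr ⟨hdA, hdS⟩
              have hf' : f ∈ A \ S := Finset.mem_sdiff.mpr ⟨hfA, hfS⟩
              exact hdf (hBone d hd' f hf')
          · exfalso
            have hd' : d ∈ A \ S := Finset.mem_sdiff.mpr ⟨hdA, hdS⟩
            have he' : e ∈ A \ S := Finset.mem_sdiff.mpr ⟨heA, heS⟩
            exact hde (hBone d hd' e he')
      · rintro ⟨hdS, heS, hde⟩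
        exact ⟨⟨hSA hdS, hSA heS⟩, hSA (hclose _ hdS _ heS hde)⟩
    show rv A = 6
    rw [hrv, hTeq, Finset.offDiag_card, hScard]
end

section
/- For any subset A of 𝔽_{2^n} \ {0} with |A| = k, one has r(A) ≤ 6·⌊k(k−1)/6⌋; moreover r(A) = k(k−1) if and only if A ∪ {0} is an additive subgroup of 𝔽_{2^n}. -/
open scoped Classical

section Aux

variable {G : Type*} [AddCommGroup G]

lemma aux_cancel (h2 : ∀ x : G, x + x = 0) (a b : G) : a + (a + b) = b := by
  rw [← add_assoc, h2, zero_add]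

lemma aux_ne (h2 : ∀ x : G, x + x = 0) {A : Finset G} (h0 : (0:G) ∉ A)
    {x y : G} (hxy : x + y ∈ A) : x ≠ y := by
  rintro rfl
  rw [h2] at hxy
  exact h0 hxy

lemma six_dvd (h2 : ∀ x : G, x + x = 0) (A : Finset G) (h0 : (0:G) ∉ A) :
    6 ∣ rv A := by
  classical
  set f : G × G → Finset G := fun p => {p.1, p.2, p.1 + p.2} with hf
  set S := (A ×ˢ A).filter (fun p => p.1 + p.2 ∈ A) with hS
  have hcard : S.card = ∑ t ∈ S.image f, (S.filter (fun p => f p = t)).card :=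
    Finset.card_eq_sum_card_fiberwise (fun p hp => Finset.mem_image_of_mem f hp)
  have hfib : ∀ t ∈ S.image f, (S.filter (fun p => f p = t)).card = 6 := by
    intro t ht
    obtain ⟨p, hp, rfl⟩ := Finset.mem_image.mp ht
    obtain ⟨a, b⟩ := p
    have hp' := hp
    rw [hS, Finset.mem_filter, Finset.mem_product] at hp'
    obtain ⟨⟨ha, hb⟩, hc⟩ := hp'
    have hab : a ≠ b := aux_ne h2 h0 hc
    have hac : a ≠ a + b := by
      intro h
      have : b = 0 := by
        have := aux_cancel h2 a b
        rw [← h, h2] at this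
        exact this.symm
      exact h0 (this ▸ hb)
    have hbc : b ≠ a + b := by
      intro h
      have : a = 0 := by
        have : b + (a + b) = a := by rw [add_comm a b]; exact aux_cancel h2 b a
        rw [← h, h2] at this
        exact this.symm
      exact h0 (this ▸ ha)
    have e1 : a + (a + b) = b := aux_cancel h2 a b
    have e2 : (a + b) + a = b := by rw [add_comm]; exact e1
    have e3 : b + (a + b) = a := by rw [add_comm a b]; exact aux_cancel h2 b a
    have e4 : (a + b) + b = a := by rw [add_comm]; exact e3
    have e5 : b + a = a + b := add_comm b a
    have key : S.filter (fun p => f p = f (a, b)) = ({a, b, a + b} : Finset G).offDiag := by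
      ext ⟨x, y⟩
      rw [Finset.mem_filter, Finset.mem_offDiag]
      constructor
      · rintro ⟨hxyS, hfeq⟩
        have hxA : x + y ∈ A := by
          rw [hS, Finset.mem_filter] at hxyS; exact hxyS.2
        have hne : x ≠ y := aux_ne h2 h0 hxA
        have hx : x ∈ f (x, y) := by simp [hf]
        have hy : y ∈ f (x, y) := by simp [hf]
        rw [hfeq] at hx hy
        exact ⟨hx, hy, hne⟩
      · rintro ⟨hx, hy, hne⟩
        simp only [hf, Finset.mem_insert, Finset.mem_singleton] at hx hy
        have goalS : ∀ u v : G, u ∈ A → v ∈ A → u + v ∈ A → (u, v) ∈ S := by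
          intro u v hu hv huv
          rw [hS, Finset.mem_filter, Finset.mem_product]
          exact ⟨⟨hu, hv⟩, huv⟩
        rcases hx with rfl | rfl | rfl <;> rcases hy with rfl | rfl | rfl <;>
          first
          | exact absurd rfl hne
          | (refine ⟨goalS _ _ (by assumption) (by assumption) ?_, ?_⟩ <;>
              (try simp only [hf, e1, e2, e3, e4, e5]) <;>
              first
                | assumption
                | (ext z; simp only [Finset.mem_insert, Finset.mem_singleton]; tauto))
    rw [key, Finset.offDiag_card]
    have h3 : ({a, b, a + b} : Finset G).card = 3 := by
      rw [Finset.card_insert_of_notMem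
          (by simp only [Finset.mem_insert, Finset.mem_singleton]; push_neg; exact ⟨hab, hac⟩),
        Finset.card_insert_of_notMem (by simpa using hbc), Finset.card_singleton]
    rw [h3]
  have : rv A = S.card := rfl
  rw [this, hcard, Finset.sum_congr rfl hfib, Finset.sum_const, smul_eq_mul]
  exact dvd_mul_left 6 _

lemma rv_le (h2 : ∀ x : G, x + x = 0) (A : Finset G) (h0 : (0:G) ∉ A) :
    rv A ≤ A.card * (A.card - 1) := by
  classical
  have hsub : (A ×ˢ A).filter (fun p => p.1 + p.2 ∈ A) ⊆ A.offDiag := by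
    intro p hp
    rw [Finset.mem_filter, Finset.mem_product] at hp
    exact Finset.mem_offDiag.mpr ⟨hp.1.1, hp.1.2, aux_ne h2 h0 hp.2⟩
  have := Finset.card_le_card hsub
  rw [Finset.offDiag_card] at this
  calc rv A ≤ A.card * A.card - A.card := this
    _ = A.card * (A.card - 1) := by cases A.card <;> simp [Nat.mul_succ, Nat.succ_mul] <;> omega

end Aux

theorem stmt14 (n : ℕ) (hn : 0 < n) (A : Finset (GaloisField 2 n)) (k : ℕ)
    (h0 : (0 : GaloisField 2 n) ∉ A) (hk : A.card = k) :
    rv A ≤ 6 * (k * (k - 1) / 6) ∧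
      (rv A = k * (k - 1) ↔
        ∃ H : AddSubgroup (GaloisField 2 n), ((insert 0 A : Finset (GaloisField 2 n)) : Set (GaloisField 2 n)) = H) := by
  classical
  have h2 : ∀ x : GaloisField 2 n, x + x = 0 := fun x => CharTwo.add_self_eq_zero x
  subst hk
  have hneg : ∀ x : GaloisField 2 n, -x = x := fun x => neg_eq_of_add_eq_zero_left (h2 x)
  have hmul : A.card * A.card - A.card = A.card * (A.card - 1) := by
    cases A.card <;> simp [Nat.mul_succ, Nat.succ_mul] <;> omega
  constructor
  · obtain ⟨m, hm⟩ := six_dvd h2 A h0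
    have hle := rv_le h2 A h0
    omega
  constructor
  · intro hr
    set S := (A ×ˢ A).filter (fun p => p.1 + p.2 ∈ A) with hS
    have hsub : S ⊆ A.offDiag := by
      intro p hp
      rw [hS, Finset.mem_filter, Finset.mem_product] at hp
      exact Finset.mem_offDiag.mpr ⟨hp.1.1, hp.1.2, aux_ne h2 h0 hp.2⟩
    have hSeq : S = A.offDiag := by
      apply Finset.eq_of_subset_of_card_le hsub
      rw [Finset.offDiag_card, hmul]
      exact hr.ge
    have hclosed : ∀ x ∈ A, ∀ y ∈ A, x ≠ y → x + y ∈ A := by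
      intro x hx y hy hxy
      have : (x, y) ∈ A.offDiag := Finset.mem_offDiag.mpr ⟨hx, hy, hxy⟩
      rw [← hSeq, hS, Finset.mem_filter] at this
      exact this.2
    refine ⟨{ carrier := ↑(insert 0 A)
              zero_mem' := by simp
              add_mem' := ?_
              neg_mem' := ?_ }, rfl⟩
    · rintro a b ha hb
      simp only [Finset.coe_insert, Set.mem_insert_iff, Finset.mem_coe] at ha hb ⊢
      rcases ha with rfl | ha
      · rw [zero_add]; exact hb
      rcases hb with rfl | hb
      · rw [add_zero]; right; exact ha
      by_cases hab : a = b
      · left; rw [hab, h2]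
      · right; exact hclosed a ha b hb hab
    · intro x hx
      rw [hneg x]; exact hx
  · rintro ⟨H, hH⟩
    have hclosed : ∀ x ∈ A, ∀ y ∈ A, x ≠ y → x + y ∈ A := by
      intro x hx y hy hxy
      have hx' : x ∈ (H : Set (GaloisField 2 n)) := by
        rw [← hH]; simp [hx]
      have hy' : y ∈ (H : Set (GaloisField 2 n)) := by
        rw [← hH]; simp [hy]
      have hsum : x + y ∈ (H : Set (GaloisField 2 n)) := H.add_mem hx' hy'
      rw [← hH] at hsum
      simp only [Finset.coe_insert, Set.mem_insert_iff, Finset.mem_coe] at hsum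
      rcases hsum with h | h
      · exfalso
        apply hxy
        have : x = -y := eq_neg_of_add_eq_zero_left h
        rw [hneg] at this; exact this
      · exact h
    have hSeq : (A ×ˢ A).filter (fun p => p.1 + p.2 ∈ A) = A.offDiag := by
      ext ⟨x, y⟩
      rw [Finset.mem_filter, Finset.mem_product, Finset.mem_offDiag]
      constructor
      · rintro ⟨⟨hx, hy⟩, hxy⟩
        exact ⟨hx, hy, aux_ne h2 h0 hxy⟩
      · rintro ⟨hx, hy, hxy⟩
        exact ⟨⟨hx, hy⟩, hclosed x hx y hy hxy⟩
    show ((A ×ˢ A).filter (fun p => p.1 + p.2 ∈ A)).card = _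
    rw [hSeq, Finset.offDiag_card, hmul]
end

section
/- Let H be an index-2 additive subgroup of 𝔽_{2^n} (e.g., the image of 𝔽_{2^{n-1}}). If A ⊆ H \ {0} and B ⊆ 𝔽_{2^n} \ H, then r(A ∪ B) = r(A) + 3·r(A,B,B). -/
open scoped Classical

theorem stmt15 (n : ℕ) (hn : 0 < n) (H : AddSubgroup (GaloisField 2 n))
    (hH : H.index = 2) (A B : Finset (GaloisField 2 n))
    (hA : ∀ a ∈ A, a ∈ H ∧ a ≠ 0) (hB : ∀ b ∈ B, b ∉ H) :
    rv (A ∪ B) = rv A + 3 * rval A B B := by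
  classical
  have char2 : ∀ x : GaloisField 2 n, x + x = 0 := fun x => CharTwo.add_self_eq_zero x
  have hmem : ∀ x y : GaloisField 2 n, x + y ∈ H ↔ (x ∈ H ↔ y ∈ H) :=
    fun x y => AddSubgroup.add_mem_iff_of_index_two hH
  have hAB : Disjoint A B := Finset.disjoint_left.2 fun a ha hb => hB a hb (hA a ha).1
  -- decompose the product
  have hprod : (A ∪ B) ×ˢ (A ∪ B) = ((A ×ˢ A ∪ A ×ˢ B) ∪ (B ×ˢ A ∪ B ×ˢ B)) := by
    rw [Finset.union_product, Finset.product_union, Finset.product_union]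
  have hdisj1 : Disjoint (A ×ˢ A) (A ×ˢ B) :=
    Finset.disjoint_left.2 fun p hp hq => by
      simp only [Finset.mem_product] at hp hq
      exact Finset.disjoint_left.1 hAB hp.2 hq.2
  have hdisj2 : Disjoint (B ×ˢ A) (B ×ˢ B) :=
    Finset.disjoint_left.2 fun p hp hq => by
      simp only [Finset.mem_product] at hp hq
      exact Finset.disjoint_left.1 hAB hp.2 hq.2
  have hdisj3 : Disjoint (A ×ˢ A ∪ A ×ˢ B) (B ×ˢ A ∪ B ×ˢ B) :=
    Finset.disjoint_left.2 fun p hp hq => by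
      simp only [Finset.mem_union, Finset.mem_product] at hp hq
      exact Finset.disjoint_left.1 hAB (hp.elim And.left And.left) (hq.elim And.left And.left)
  have hcard : rv (A ∪ B) =
      ((A ×ˢ A).filter (fun p => p.1 + p.2 ∈ A ∪ B)).card +
      ((A ×ˢ B).filter (fun p => p.1 + p.2 ∈ A ∪ B)).card +
      (((B ×ˢ A).filter (fun p => p.1 + p.2 ∈ A ∪ B)).card +
      ((B ×ˢ B).filter (fun p => p.1 + p.2 ∈ A ∪ B)).card) := by
    rw [rv, rval, hprod, Finset.filter_union, Finset.card_union_of_disjoint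
      (Finset.disjoint_filter_filter hdisj3), Finset.filter_union, Finset.filter_union,
      Finset.card_union_of_disjoint (Finset.disjoint_filter_filter hdisj1),
      Finset.card_union_of_disjoint (Finset.disjoint_filter_filter hdisj2)]
  -- term 1
  have t1 : ((A ×ˢ A).filter (fun p => p.1 + p.2 ∈ A ∪ B)).card = rv A := by
    rw [rv, rval]
    congr 1
    apply Finset.filter_congr
    intro p hp
    simp only [Finset.mem_product] at hp
    have hsum : p.1 + p.2 ∈ H := (hmem _ _).2 (by simp [(hA _ hp.1).1, (hA _ hp.2).1])
    simp only [Finset.mem_union]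
    constructor
    · rintro (h | h)
      · exact h
      · exact absurd hsum (hB _ h)
    · exact Or.inl
  -- term 2
  have t2 : ((A ×ˢ B).filter (fun p => p.1 + p.2 ∈ A ∪ B)).card = rval A B B := by
    rw [rval]
    congr 1
    apply Finset.filter_congr
    intro p hp
    simp only [Finset.mem_product] at hp
    have hsum : p.1 + p.2 ∉ H := fun h =>
      hB _ hp.2 (((hmem _ _).1 h).1 (hA _ hp.1).1)
    simp only [Finset.mem_union]
    constructor
    · rintro (h | h)
      · exact absurd (hA _ h).1 hsum
      · exact h
    · exact Or.inr
  -- term 3 : swap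
  have t3 : ((B ×ˢ A).filter (fun p => p.1 + p.2 ∈ A ∪ B)).card = rval A B B := by
    rw [rval]
    apply Finset.card_bij' (fun p _ => Prod.swap p) (fun p _ => Prod.swap p)
    · intro p hp
      simp only [Finset.mem_filter, Finset.mem_product, Prod.fst_swap, Prod.snd_swap,
        Finset.mem_union] at hp ⊢
      obtain ⟨⟨h1, h2⟩, h3⟩ := hp
      have hsum : p.1 + p.2 ∉ H := fun h =>
        hB _ h1 (((hmem _ _).1 h).2 (hA _ h2).1)
      refine ⟨⟨h2, h1⟩, ?_⟩
      rw [add_comm]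
      rcases h3 with h | h
      · exact absurd (hA _ h).1 hsum
      · exact h
    · intro p hp
      simp only [Finset.mem_filter, Finset.mem_product, Prod.fst_swap, Prod.snd_swap,
        Finset.mem_union] at hp ⊢
      obtain ⟨⟨h1, h2⟩, h3⟩ := hp
      exact ⟨⟨h2, h1⟩, by rw [add_comm]; exact Or.inr h3⟩
    · intro p _; simp
    · intro p _; simp
  -- term 4
  have t4 : ((B ×ˢ B).filter (fun p => p.1 + p.2 ∈ A ∪ B)).card = rval A B B := by
    rw [rval]
    refine Finset.card_bij' (fun p _ => (p.1 + p.2, p.2)) (fun p _ => (p.1 + p.2, p.2)) ?_ ?_ ?_ ?_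
    rotate_left 2
    · intro p _
      have : p.1 + p.2 + p.2 = p.1 := by rw [add_assoc, char2, add_zero]
      simp [this]
    · intro p _
      have : p.1 + p.2 + p.2 = p.1 := by rw [add_assoc, char2, add_zero]
      simp [this]
    · intro p hp
      simp only [Finset.mem_filter, Finset.mem_product, Finset.mem_union] at hp ⊢
      obtain ⟨⟨h1, h2⟩, h3⟩ := hp
      have hsum : p.1 + p.2 ∈ H := (hmem _ _).2 (by simp [hB _ h1, hB _ h2])
      have h3' : p.1 + p.2 ∈ A := by
        rcases h3 with h | h
        · exact h
        · exact absurd hsum (hB _ h)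
      refine ⟨⟨h3', h2⟩, ?_⟩
      have : p.1 + p.2 + p.2 = p.1 := by rw [add_assoc, char2, add_zero]
      rw [this]; exact h1
    · intro p hp
      simp only [Finset.mem_filter, Finset.mem_product, Finset.mem_union] at hp ⊢
      obtain ⟨⟨h1, h2⟩, h3⟩ := hp
      have : p.1 + p.2 + p.2 = p.1 := by rw [add_assoc, char2, add_zero]
      exact ⟨⟨h3, h2⟩, by rw [this]; exact Or.inl h1⟩
  rw [hcard, t1, t2, t3, t4]
  ring
end

section
/- Let H be an index-2 additive subgroup of 𝔽_{2^n}, A = {a₁,…,a_k} ⊆ H \ {0}, and fix v ∉ H. Let B = {a_i + v : 1 ≤ i ≤ k}. Then r(A ∪ B) = 4·r(A). -/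
open scoped Classical

theorem stmt18 (n : ℕ) (hn : 0 < n) (H : AddSubgroup (GaloisField 2 n))
    (hH : H.index = 2) (A : Finset (GaloisField 2 n))
    (hA : ∀ a ∈ A, a ∈ H ∧ a ≠ 0) (v : GaloisField 2 n) (hv : v ∉ H)
    (B : Finset (GaloisField 2 n)) (hB : B = A.image (fun a => a + v)) :
    rv (A ∪ B) = 4 * rv A := by
  classical
  have char2 : ∀ x : GaloisField 2 n, x + x = 0 := fun x => CharTwo.add_self_eq_zero x
  have hvv : ∀ x : GaloisField 2 n, x + v + v = x := fun x => by
    rw [add_assoc, char2, add_zero]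
  have hmem : ∀ x y : GaloisField 2 n, x + y ∈ H ↔ (x ∈ H ↔ y ∈ H) :=
    fun x y => AddSubgroup.add_mem_iff_of_index_two hH
  have hAH : ∀ a ∈ A, a ∈ H := fun a ha => (hA a ha).1
  have memB : ∀ x : GaloisField 2 n, x ∈ B ↔ x + v ∈ A := by
    intro x
    subst hB
    simp only [Finset.mem_image]
    constructor
    · rintro ⟨a, ha, rfl⟩
      rwa [hvv]
    · intro h
      exact ⟨x + v, h, hvv x⟩
  have hBH : ∀ b ∈ B, b ∉ H := by
    intro b hb hbH
    have h1 : b + v ∈ H := hAH _ ((memB b).1 hb)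
    exact hv (((hmem b v).1 h1).1 hbH)
  set f : (GaloisField 2 n × GaloisField 2 n) → Prop := fun p => p.1 + p.2 ∈ A ∪ B with hf
  set g : (GaloisField 2 n × GaloisField 2 n) → Prop := fun p => p.1 + p.2 ∈ A with hg
  have hsplit : ((A ∪ B) ×ˢ (A ∪ B)).filter f =
      (((A ×ˢ A).filter f ∪ (A ×ˢ B).filter f) ∪ ((B ×ˢ A).filter f ∪ (B ×ˢ B).filter f)) := by
    rw [Finset.union_product, Finset.product_union, Finset.product_union,
      Finset.filter_union, Finset.filter_union, Finset.filter_union]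
  -- basic disjointness between products
  have hdisjAB : ∀ x ∈ A, x ∉ B := fun x hx hxB => hBH x hxB (hAH x hx)
  have pd : ∀ (s t u w : Finset (GaloisField 2 n)),
      (∀ x, x ∈ s ×ˢ t → x ∈ u ×ˢ w → False) →
      Disjoint ((s ×ˢ t).filter f) ((u ×ˢ w).filter f) := by
    intro s t u w h
    refine Finset.disjoint_left.2 fun x hx1 hx2 => ?_
    exact h x (Finset.mem_filter.1 hx1).1 (Finset.mem_filter.1 hx2).1
  have d1 : Disjoint ((A ×ˢ A).filter f) ((A ×ˢ B).filter f) := by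
    refine pd _ _ _ _ fun x h1 h2 => ?_
    exact hdisjAB x.2 (Finset.mem_product.1 h1).2 (Finset.mem_product.1 h2).2
  have d2 : Disjoint ((B ×ˢ A).filter f) ((B ×ˢ B).filter f) := by
    refine pd _ _ _ _ fun x h1 h2 => ?_
    exact hdisjAB x.2 (Finset.mem_product.1 h1).2 (Finset.mem_product.1 h2).2
  have d3 : Disjoint (((A ×ˢ A).filter f ∪ (A ×ˢ B).filter f))
      (((B ×ˢ A).filter f ∪ (B ×ˢ B).filter f)) := by
    refine Finset.disjoint_left.2 fun x hx1 hx2 => ?_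
    have h1 : x.1 ∈ A := by
      rcases Finset.mem_union.1 hx1 with h | h
      · exact (Finset.mem_product.1 (Finset.mem_filter.1 h).1).1
      · exact (Finset.mem_product.1 (Finset.mem_filter.1 h).1).1
    have h2 : x.1 ∈ B := by
      rcases Finset.mem_union.1 hx2 with h | h
      · exact (Finset.mem_product.1 (Finset.mem_filter.1 h).1).1
      · exact (Finset.mem_product.1 (Finset.mem_filter.1 h).1).1
    exact hdisjAB x.1 h1 h2
  have hrvA : rv A = ((A ×ˢ A).filter g).card := rfl
  -- piece 1 : A × A
  have c1 : ((A ×ˢ A).filter f).card = rv A := by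
    rw [hrvA]
    congr 1
    apply Finset.filter_congr
    intro p hp
    rcases Finset.mem_product.1 hp with ⟨h1, h2⟩
    have hsum : p.1 + p.2 ∈ H := (hmem _ _).2 (by simp [hAH _ h1, hAH _ h2])
    simp only [hf, hg, Finset.mem_union]
    constructor
    · rintro (h | h)
      · exact h
      · exact absurd hsum (hBH _ h)
    · exact Or.inl
  -- piece 2 : A × B
  have c2 : ((A ×ˢ B).filter f).card = rv A := by
    rw [hrvA]
    refine Finset.card_bij' (fun p _ => (p.1, p.2 + v)) (fun p _ => (p.1, p.2 + v)) ?_ ?_ ?_ ?_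
    · intro p hp
      rcases Finset.mem_filter.1 hp with ⟨hp1, hp2⟩
      rcases Finset.mem_product.1 hp1 with ⟨h1, h2⟩
      have h2' : p.2 + v ∈ A := (memB _).1 h2
      have hsum : p.1 + p.2 ∉ H := by
        rw [hmem]
        intro h
        exact hBH _ h2 (h.1 (hAH _ h1))
      have hsB : p.1 + p.2 ∈ B := by
        rcases Finset.mem_union.1 hp2 with h | h
        · exact absurd (hAH _ h) hsum
        · exact h
      refine Finset.mem_filter.2 ⟨Finset.mem_product.2 ⟨h1, h2'⟩, ?_⟩
      show p.1 + (p.2 + v) ∈ A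
      rw [← add_assoc]
      exact (memB _).1 hsB
    · intro p hp
      rcases Finset.mem_filter.1 hp with ⟨hp1, hp2⟩
      rcases Finset.mem_product.1 hp1 with ⟨h1, h2⟩
      have h2' : p.2 + v ∈ B := (memB _).2 (by rwa [hvv])
      refine Finset.mem_filter.2 ⟨Finset.mem_product.2 ⟨h1, h2'⟩, ?_⟩
      show p.1 + (p.2 + v) ∈ A ∪ B
      refine Finset.mem_union_right _ ((memB _).2 ?_)
      rw [← add_assoc] at *
      rwa [hvv]
    · intro p hp; simp [hvv]
    · intro p hp; simp [hvv]
  -- piece 3 : B × A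
  have c3 : ((B ×ˢ A).filter f).card = rv A := by
    rw [hrvA]
    refine Finset.card_bij' (fun p _ => (p.1 + v, p.2)) (fun p _ => (p.1 + v, p.2)) ?_ ?_ ?_ ?_
    · intro p hp
      rcases Finset.mem_filter.1 hp with ⟨hp1, hp2⟩
      rcases Finset.mem_product.1 hp1 with ⟨h1, h2⟩
      have h1' : p.1 + v ∈ A := (memB _).1 h1
      have hsum : p.1 + p.2 ∉ H := by
        rw [hmem]
        intro h
        exact hBH _ h1 (h.2 (hAH _ h2))
      have hsB : p.1 + p.2 ∈ B := by
        rcases Finset.mem_union.1 hp2 with h | h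
        · exact absurd (hAH _ h) hsum
        · exact h
      refine Finset.mem_filter.2 ⟨Finset.mem_product.2 ⟨h1', h2⟩, ?_⟩
      show p.1 + v + p.2 ∈ A
      have : p.1 + v + p.2 = p.1 + p.2 + v := by ring
      rw [this]
      exact (memB _).1 hsB
    · intro p hp
      rcases Finset.mem_filter.1 hp with ⟨hp1, hp2⟩
      rcases Finset.mem_product.1 hp1 with ⟨h1, h2⟩
      have h1' : p.1 + v ∈ B := (memB _).2 (by rwa [hvv])
      refine Finset.mem_filter.2 ⟨Finset.mem_product.2 ⟨h1', h2⟩, ?_⟩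
      show p.1 + v + p.2 ∈ A ∪ B
      refine Finset.mem_union_right _ ((memB _).2 ?_)
      have : p.1 + v + p.2 + v = p.1 + p.2 := by
        rw [show p.1 + v + p.2 + v = p.1 + p.2 + (v + v) by ring, char2, add_zero]
      rw [this]; exact hp2
    · intro p hp; simp [hvv]
    · intro p hp; simp [hvv]
  -- piece 4 : B × B
  have c4 : ((B ×ˢ B).filter f).card = rv A := by
    rw [hrvA]
    refine Finset.card_bij' (fun p _ => (p.1 + v, p.2 + v)) (fun p _ => (p.1 + v, p.2 + v)) ?_ ?_ ?_ ?_
    · intro p hp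
      rcases Finset.mem_filter.1 hp with ⟨hp1, hp2⟩
      rcases Finset.mem_product.1 hp1 with ⟨h1, h2⟩
      have hsum : p.1 + p.2 ∈ H := (hmem _ _).2 (by simp [hBH _ h1, hBH _ h2])
      have hsA : p.1 + p.2 ∈ A := by
        rcases Finset.mem_union.1 hp2 with h | h
        · exact h
        · exact absurd hsum (hBH _ h)
      refine Finset.mem_filter.2 ⟨Finset.mem_product.2 ⟨(memB _).1 h1, (memB _).1 h2⟩, ?_⟩
      show p.1 + v + (p.2 + v) ∈ A
      have : p.1 + v + (p.2 + v) = p.1 + p.2 := by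
        rw [show p.1 + v + (p.2 + v) = p.1 + p.2 + (v + v) by ring, char2, add_zero]
      rw [this]; exact hsA
    · intro p hp
      rcases Finset.mem_filter.1 hp with ⟨hp1, hp2⟩
      rcases Finset.mem_product.1 hp1 with ⟨h1, h2⟩
      refine Finset.mem_filter.2 ⟨Finset.mem_product.2
        ⟨(memB _).2 (by rwa [hvv]), (memB _).2 (by rwa [hvv])⟩, ?_⟩
      show p.1 + v + (p.2 + v) ∈ A ∪ B
      have : p.1 + v + (p.2 + v) = p.1 + p.2 := by
        rw [show p.1 + v + (p.2 + v) = p.1 + p.2 + (v + v) by ring, char2, add_zero]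
      rw [this]; exact Finset.mem_union_left _ hp2
    · intro p hp; simp [hvv]
    · intro p hp; simp [hvv]
  show ((( A ∪ B) ×ˢ (A ∪ B)).filter f).card = 4 * rv A
  rw [hsplit, Finset.card_union_of_disjoint d3, Finset.card_union_of_disjoint d1,
    Finset.card_union_of_disjoint d2, c1, c2, c3, c4]
  ring
end
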